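/- Let {S(t) : t ≥ 0} be a semigroup on a metric space (V,d) which possesses a global attractor A in V, and let T > 0. If there is a nonempty bounded absorbing set B ⊆ V such that N^V(S(kT)B, a·q^k) ≤ b·h^k for all integers k ≥ k₀, for some k₀ ∈ ℕ, a,b > 0, q ∈ (0,1) and h ≥ 1, then there exists a countable set E₀ ⊆ B such that M₀ = A ∪ E₀ = cl_V(E₀) ⊆ B is a T-discrete exponential attractor for the semigroup in V, it attracts at every exponential rate ξ ∈ (0, (1/T)·ln(1/q)), and its fractal dimension satisfies dim_f^V(M₀) ≤ log_{1/q} h. -/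

import Mathlib

open Filter Metric Set Topology Bornology
open scoped ENNReal

section Defs

variable {V : Type*} [MetricSpace V]

/-- A semigroup (semiflow) of maps `S t : V → V`, `t ∈ [0,∞)`. -/
def IsSemiflow (S : ℝ → V → V) : Prop :=
  (∀ x : V, S 0 x = x) ∧ ∀ t s : ℝ, 0 ≤ t → 0 ≤ s → ∀ x : V, S t (S s x) = S (t + s) x

/-- One-sided Hausdorff distance `dist^V(G,A) = sup_{x∈G} inf_{y∈A} d(x,y)` (in `ℝ≥0∞`). -/
noncomputable def attrDist (G A : Set V) : ℝ≥0∞ :=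
  ⨆ x ∈ G, EMetric.infEdist x A

/-- The set `A` attracts all bounded subsets of `V`. -/
def AttractsSet (S : ℝ → V → V) (A : Set V) : Prop :=
  ∀ G : Set V, IsBounded G → Tendsto (fun t : ℝ => attrDist (S t '' G) A) atTop (𝓝 0)

/-- A global attractor: nonempty, compact, invariant, attracts all bounded sets. -/
def IsGlobalAttr (S : ℝ → V → V) (A : Set V) : Prop :=
  A.Nonempty ∧ IsCompact A ∧ (∀ t : ℝ, 0 ≤ t → S t '' A = A) ∧ AttractsSet S A

/-- `B` is an absorbing set for the semigroup. -/
def IsAbsorbingSet (S : ℝ → V → V) (B : Set V) : Prop :=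
  ∀ G : Set V, IsBounded G → ∃ tG : ℝ, 0 ≤ tG ∧ ∀ t : ℝ, tG ≤ t → S t '' G ⊆ B

/-- The semigroup is asymptotically closed. -/
def AsympClosed (S : ℝ → V → V) : Prop :=
  ∀ t : ℝ, 0 ≤ t → ∀ tk : ℕ → ℝ, (∀ k, 0 ≤ tk k) → Tendsto tk atTop atTop →
    ∀ xk : ℕ → V, IsBounded (range xk) → ∀ x y : V,
      Tendsto (fun k => S (tk k) (xk k)) atTop (𝓝 x) →
      Tendsto (fun k => S (t + tk k) (xk k)) atTop (𝓝 y) → S t x = y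

/-- The ω-limit set `Λ^V(G) = ⋂_{s ≥ 0} cl_V ⋃_{t ≥ s} S(t)G`. -/
def omegaLim (S : ℝ → V → V) (G : Set V) : Set V :=
  ⋂ (s : ℝ) (_ : 0 ≤ s), closure (⋃ (t : ℝ) (_ : s ≤ t), S t '' G)

/-- `N^V(G,ε)`: minimal number of open `ε`-balls centered in `G` needed to cover `G`. -/
noncomputable def coverN (G : Set V) (ε : ℝ) : ℝ≥0∞ :=
  ⨅ (F : Finset V) (_ : ↑F ⊆ G) (_ : G ⊆ ⋃ x ∈ F, ball x ε), (F.card : ℝ≥0∞)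

open Classical in
/-- Fractal (box-counting) dimension `limsup_{ε→0⁺} log N^V(M,ε) / log (1/ε)`. -/
noncomputable def fracDim (M : Set V) : ℝ≥0∞ :=
  limsup (fun ε : ℝ =>
    if coverN M ε = ⊤ then (⊤ : ℝ≥0∞)
    else ENNReal.ofReal (Real.log (coverN M ε).toReal / Real.log (1 / ε))) (𝓝[>] (0 : ℝ))

/-- `M` attracts all bounded sets at exponential rate `ξ`. -/
def ExpAttractsAt (S : ℝ → V → V) (M : Set V) (ξ : ℝ) : Prop :=
  ∀ G : Set V, IsBounded G →
    Tendsto (fun t : ℝ => ENNReal.ofReal (Real.exp (ξ * t)) * attrDist (S t '' G) M)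
      atTop (𝓝 0)

/-- A `T`-discrete exponential attractor. -/
def IsDiscExpAttr (S : ℝ → V → V) (T : ℝ) (M : Set V) : Prop :=
  M.Nonempty ∧ IsCompact M ∧ S T '' M ⊆ M ∧ fracDim M ≠ ⊤ ∧
    ∃ ξ : ℝ, 0 < ξ ∧ ExpAttractsAt S M ξ

/-- The covering condition `N^V(S(kT)B, a·qᵏ) ≤ b·hᵏ` for `k ≥ k₀`. -/
def CoveringCond (S : ℝ → V → V) (T : ℝ) (B : Set V) (k₀ : ℕ) (a b q h : ℝ) : Prop :=
  ∀ k : ℕ, k₀ ≤ k →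
    coverN (S (k * T) '' B) (a * q ^ k) ≤ ENNReal.ofReal (b * h ^ k)

end Defs

section Aux

variable {V : Type*} [MetricSpace V]

lemma attrDist_le_of {G M : Set V} {c : ℝ≥0∞} (h : ∀ x ∈ G, EMetric.infEdist x M ≤ c) :
    attrDist G M ≤ c := iSup₂_le h

lemma coverN_le_card {G : Set V} {ε : ℝ} (F : Finset V) (h1 : ↑F ⊆ G)
    (h2 : G ⊆ ⋃ x ∈ F, ball x ε) : coverN G ε ≤ F.card := by
  refine iInf_le_of_le F ?_
  refine iInf_le_of_le h1 ?_
  exact iInf_le _ h2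

lemma coverN_anti {G : Set V} {ε ε' : ℝ} (h : ε ≤ ε') : coverN G ε' ≤ coverN G ε := by
  refine le_iInf fun F => le_iInf fun h1 => le_iInf fun h2 => ?_
  refine coverN_le_card F h1 (h2.trans ?_)
  exact Set.iUnion₂_mono fun x _ => ball_subset_ball h

lemma exists_finset_of_coverN_lt {G : Set V} {ε : ℝ} {c : ℝ≥0∞} (h : coverN G ε < c) :
    ∃ F : Finset V, ↑F ⊆ G ∧ (G ⊆ ⋃ x ∈ F, ball x ε) ∧ (F.card : ℝ≥0∞) < c := by
  rw [coverN, iInf_lt_iff] at h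
  obtain ⟨F, hF⟩ := h
  rw [iInf_lt_iff] at hF
  obtain ⟨h1, hF⟩ := hF
  rw [iInf_lt_iff] at hF
  obtain ⟨h2, hF⟩ := hF
  exact ⟨F, h1, h2, hF⟩

lemma one_le_coverN {G : Set V} {ε : ℝ} (hG : G.Nonempty) : 1 ≤ coverN G ε := by
  refine le_iInf fun F => le_iInf fun h1 => le_iInf fun h2 => ?_
  obtain ⟨x, hx⟩ := hG
  have := h2 hx
  simp only [Set.mem_iUnion] at this
  obtain ⟨y, hy, -⟩ := this
  have : 0 < F.card := Finset.card_pos.2 ⟨y, hy⟩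
  exact_mod_cast this

lemma infEdist_le_attrDist {G M : Set V} {y : V} (hy : y ∈ G) :
    EMetric.infEdist y M ≤ attrDist G M :=
  le_iSup₂ (f := fun x (_ : x ∈ G) => EMetric.infEdist x M) y hy

open Classical in
/-- The recursive net construction. -/
noncomputable def netSeq (S : ℝ → V → V) (T : ℝ) (W : ℕ → Finset V) : ℕ → Finset V
  | 0 => W 0
  | n + 1 => W (n + 1) ∪ (netSeq S T W n).image (S T)

omit [MetricSpace V] in
open Classical in
lemma W_subset_netSeq (S : ℝ → V → V) (T : ℝ) (W : ℕ → Finset V) (n : ℕ) :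
    W n ⊆ netSeq S T W n := by
  cases n with
  | zero => exact Finset.Subset.refl _
  | succ n => exact Finset.subset_union_left

end Aux

section Statement3

variable {V : Type*} [MetricSpace V]

set_option maxHeartbeats 2000000 in
theorem Tdiscrete_exponential_attractor_with_global_attractor
    (S : ℝ → V → V) (hS : IsSemiflow S)
    (A : Set V) (hA : IsGlobalAttr S A)
    (T : ℝ) (hT : 0 < T)
    (B : Set V) (hBne : B.Nonempty) (hBbdd : IsBounded B) (hBabs : IsAbsorbingSet S B)
    (k₀ : ℕ) (a b q h : ℝ) (ha : 0 < a) (hb : 0 < b) (hq0 : 0 < q) (hq1 : q < 1)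
    (hh : 1 ≤ h) (hcov : CoveringCond S T B k₀ a b q h) :
    ∃ E₀ : Set V, E₀.Countable ∧ E₀ ⊆ B ∧
      A ∪ E₀ = closure E₀ ∧ closure E₀ ⊆ B ∧
      IsDiscExpAttr S T (closure E₀) ∧
      (∀ ξ : ℝ, 0 < ξ → ξ < 1 / T * Real.log (1 / q) → ExpAttractsAt S (closure E₀) ξ) ∧
      fracDim (closure E₀) ≤ ENNReal.ofReal (Real.log h / Real.log (1 / q)) := by
  classical
  obtain ⟨hS0, hSadd⟩ := hS
  obtain ⟨hAne, hAcomp, hAinv, hAattr⟩ := hA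
  obtain ⟨tB, htB0, htB⟩ := hBabs B hBbdd
  have hcomp : ∀ t s : ℝ, 0 ≤ t → 0 ≤ s → ∀ G : Set V, S t '' (S s '' G) = S (t + s) '' G := by
    intro t s ht hs G
    rw [← Set.image_comp]
    exact Set.image_congr fun x _ => hSadd t s ht hs x
  -- A ⊆ B
  obtain ⟨tA, htA0, htA⟩ := hBabs A hAcomp.isBounded
  have hAB : A ⊆ B := by
    have h1 := htA tA le_rfl
    rw [hAinv tA htA0] at h1; exact h1
  -- choose k₁ with k₁ ≥ k₀ and k₁ * T ≥ tB
  obtain ⟨k₁', hk₁'⟩ := exists_nat_ge (tB / T)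
  set k₁ : ℕ := max k₁' k₀ with hk₁def
  have hk₁k₀ : k₀ ≤ k₁ := le_max_right _ _
  have hk₁T : tB ≤ (k₁ : ℝ) * T := by
    have h1 : (k₁' : ℝ) ≤ (k₁ : ℝ) := by exact_mod_cast le_max_left _ _
    calc tB = tB / T * T := by field_simp
    _ ≤ (k₁' : ℝ) * T := by nlinarith [hk₁'.trans h1, hk₁']
    _ ≤ (k₁ : ℝ) * T := by nlinarith
  have habs : ∀ s : ℝ, tB ≤ s → S s '' B ⊆ B := htB
  have hkT0 : ∀ n : ℕ, (0:ℝ) ≤ (n : ℝ) * T := fun n => by positivity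
  have hkTtB : ∀ n : ℕ, tB ≤ ((n + k₁ : ℕ) : ℝ) * T := by
    intro n
    refine hk₁T.trans ?_
    have : (k₁ : ℝ) ≤ ((n + k₁ : ℕ) : ℝ) := by push_cast; linarith [Nat.cast_nonneg (α := ℝ) n]
    nlinarith
  -- Extract the nets W n covering S ((n+k₁)T) '' B
  have hnet : ∀ n : ℕ, ∃ F : Finset V, ↑F ⊆ S (((n + k₁ : ℕ) : ℝ) * T) '' B ∧
      (S (((n + k₁ : ℕ) : ℝ) * T) '' B ⊆ ⋃ x ∈ F, ball x (a * q ^ (n + k₁))) ∧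
      (F.card : ℝ) ≤ b * h ^ (n + k₁) + 1 := by
    intro n
    have hk : k₀ ≤ n + k₁ := le_trans hk₁k₀ (Nat.le_add_left _ _)
    have h1 := hcov (n + k₁) hk
    have h2 : coverN (S (((n + k₁ : ℕ) : ℝ) * T) '' B) (a * q ^ (n + k₁)) <
        ENNReal.ofReal (b * h ^ (n + k₁)) + 1 :=
      h1.trans_lt (ENNReal.lt_add_right ENNReal.ofReal_ne_top one_ne_zero)
    obtain ⟨F, hF1, hF2, hF3⟩ := exists_finset_of_coverN_lt h2
    refine ⟨F, hF1, hF2, ?_⟩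
    have h4 : (F.card : ℝ≥0∞) < ENNReal.ofReal (b * h ^ (n + k₁) + 1) := by
      rw [ENNReal.ofReal_add (by positivity) zero_le_one, ENNReal.ofReal_one]
      exact hF3
    rw [← ENNReal.ofReal_natCast F.card,
      ENNReal.ofReal_lt_ofReal_iff_of_nonneg (by positivity)] at h4
    exact h4.le
  choose W hWsub hWcov hWcard using hnet
  set E : ℕ → Finset V := netSeq S T W with hEdef
  set E₀ : Set V := ⋃ n, (E n : Set V) with hE₀def
  -- basic properties of E n
  have hEn_img : ∀ n : ℕ, (E n : Set V) ⊆ S (((n + k₁ : ℕ) : ℝ) * T) '' B := by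
    intro n
    induction n with
    | zero => exact hWsub 0
    | succ n ih =>
      have hE : (E (n+1) : Set V) = (W (n+1) : Set V) ∪ S T '' (E n : Set V) := by
        simp [hEdef, netSeq, Finset.coe_union, Finset.coe_image]
      rw [hE]
      refine Set.union_subset (hWsub (n+1)) ?_
      refine (Set.image_mono ih).trans ?_
      rw [hcomp T _ hT.le (by positivity) B]
      apply Set.image_subset_iff.2
      intro x hx
      have harith : T + ((n + k₁ : ℕ) : ℝ) * T = ((n + 1 + k₁ : ℕ) : ℝ) * T := by
        push_cast; ring
      rw [harith] at *
      exact Set.mem_image_of_mem _ hx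
  have hEnB : ∀ n : ℕ, (E n : Set V) ⊆ B := fun n => (hEn_img n).trans (habs _ (hkTtB n))
  have hWE : ∀ n : ℕ, (W n : Set V) ⊆ E₀ := fun n =>
    (Finset.coe_subset.2 (W_subset_netSeq S T W n)).trans (Set.subset_iUnion (fun m => (E m : Set V)) n)
  have hE₀B : E₀ ⊆ B := Set.iUnion_subset hEnB
  have hE₀ctble : E₀.Countable := Set.countable_iUnion fun n => (E n).countable_toSet
  have hEn_E₀ : ∀ n : ℕ, (E n : Set V) ⊆ E₀ := fun n => Set.subset_iUnion (fun m => (E m : Set V)) n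
  -- A is inside every S((n+k₁)T) '' B
  have hA_img : ∀ t : ℝ, 0 ≤ t → A ⊆ S t '' B := by
    intro t ht
    conv_lhs => rw [← hAinv t ht]
    exact Set.image_mono hAB
  -- images at late times are inside earlier images of B
  have hEm_late : ∀ n m : ℕ, n + k₁ ≤ m → (E m : Set V) ⊆ S (((n + k₁ : ℕ) : ℝ) * T) '' B := by
    intro n m hnm
    refine (hEn_img m).trans ?_
    have hmn : n ≤ m := le_trans (Nat.le_add_right _ _) hnm
    have hsk : k₁ ≤ m - n := by omega
    have harith : ((m + k₁ : ℕ) : ℝ) * T = ((n + k₁ : ℕ) : ℝ) * T + ((m - n : ℕ) : ℝ) * T := by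
      have : ((m - n : ℕ) : ℝ) = (m : ℝ) - n := by
        push_cast [Nat.cast_sub hmn]; ring
      rw [this]; push_cast; ring
    rw [harith, ← hcomp _ _ (by positivity) (by positivity) B]
    refine Set.image_mono (habs _ ?_)
    refine hk₁T.trans ?_
    have : (k₁ : ℝ) ≤ ((m - n : ℕ) : ℝ) := by exact_mod_cast hsk
    nlinarith
  -- E n card bound
  have hEcard : ∀ n : ℕ, ((E n).card : ℝ) ≤ (n + 1) * (b * h ^ (n + k₁) + 1) := by
    intro n
    induction n with
    | zero => show ((W 0).card : ℝ) ≤ _; simpa using hWcard 0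
    | succ n ih =>
      have hcard : (E (n+1)).card ≤ (W (n+1)).card + (E n).card := by
        have : E (n+1) = W (n+1) ∪ (E n).image (S T) := rfl
        rw [this]
        exact (Finset.card_union_le _ _).trans (by
          have := Finset.card_image_le (f := S T) (s := E n)
          omega)
      have h1 : ((E (n+1)).card : ℝ) ≤ (b * h ^ (n + 1 + k₁) + 1) + ((E n).card : ℝ) := by
        have := hWcard (n+1)
        push_cast
        exact_mod_cast (by exact_mod_cast hcard : ((E (n+1)).card : ℝ) ≤ ((W (n+1)).card : ℝ) + ((E n).card : ℝ)).trans (by linarith)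
      have hpow : b * h ^ (n + k₁) + 1 ≤ b * h ^ (n + 1 + k₁) + 1 := by
        have : h ^ (n + k₁) ≤ h ^ (n + 1 + k₁) := pow_le_pow_right₀ hh (by omega)
        nlinarith
      push_cast
      push_cast at ih
      nlinarith [hb, pow_pos (lt_of_lt_of_le one_pos hh) (n + 1 + k₁)]
  -- A ⊆ closure E₀
  have hq1' : q ≤ 1 := hq1.le
  have hAclos : A ⊆ closure E₀ := by
    intro x hx
    rw [Metric.mem_closure_iff]
    intro ε hε
    obtain ⟨n, hn⟩ := exists_pow_lt_of_lt_one (show (0:ℝ) < ε / a by positivity) hq1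
    have hrad : a * q ^ (n + k₁) < ε := by
      have h1 : q ^ (n + k₁) ≤ q ^ n := pow_le_pow_of_le_one hq0.le hq1' (by omega)
      have h2 : a * q ^ n < ε := by
        rw [← lt_div_iff₀' ha]; exact hn
      nlinarith
    have hxim : x ∈ S (((n + k₁ : ℕ) : ℝ) * T) '' B := hA_img _ (by positivity) hx
    have := hWcov n hxim
    simp only [Set.mem_iUnion] at this
    obtain ⟨w, hw, hxw⟩ := this
    exact ⟨w, hWE n hw, (mem_ball.1 hxw).trans_le hrad.le⟩
  -- closure E₀ ⊆ A ∪ E₀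
  have hclos_sub : closure E₀ ⊆ A ∪ E₀ := by
    intro x hx
    by_cases hxE : x ∈ E₀
    · exact Or.inr hxE
    left
    have hAx : x ∈ closure A := by
      rw [EMetric.mem_closure_iff_infEdist_zero]
      have hkey : ∀ ε : ℝ, 0 < ε → EMetric.infEdist x A ≤ ENNReal.ofReal ε := by
        intro ε hε
        have hev := (ENNReal.tendsto_nhds_zero.1 (hAattr B hBbdd)) (ENNReal.ofReal (ε/2))
          (by simp [ENNReal.ofReal_pos]; positivity)
        obtain ⟨t₀, ht₀⟩ := eventually_atTop.1 hev
        obtain ⟨N, hN⟩ := exists_nat_ge (t₀ / T)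
        have htN : ∀ m : ℕ, N ≤ m → t₀ ≤ ((m + k₁ : ℕ) : ℝ) * T := by
          intro m hm
          have h1 : (N : ℝ) ≤ ((m + k₁ : ℕ) : ℝ) := by
            push_cast; have : (N:ℝ) ≤ m := by exact_mod_cast hm
            linarith [Nat.cast_nonneg (α := ℝ) k₁]
          calc t₀ = t₀ / T * T := by field_simp
          _ ≤ (N : ℝ) * T := by nlinarith
          _ ≤ ((m + k₁ : ℕ) : ℝ) * T := by nlinarith
        set F : Set V := ⋃ m ∈ Finset.range N, (E m : Set V) with hFdef
        have hFfin : F.Finite := Set.Finite.biUnion (Finset.range N).finite_toSet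
          (fun m _ => (E m).finite_toSet)
        have hxF : x ∉ F := by
          intro hxF
          simp only [hFdef, Set.mem_iUnion] at hxF
          obtain ⟨m, -, hm⟩ := hxF
          exact hxE (hEn_E₀ m hm)
        obtain ⟨r, hr, hball⟩ := Metric.isOpen_iff.1 hFfin.isClosed.isOpen_compl x hxF
        obtain ⟨y, hyE, hxy⟩ := Metric.mem_closure_iff.1 hx (min r (ε/2))
          (lt_min hr (by positivity))
        obtain ⟨m, hym⟩ := Set.mem_iUnion.1 hyE
        have hymN : N ≤ m := by
          by_contra hlt
          push_neg at hlt
          have : y ∈ F := by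
            simp only [hFdef, Set.mem_iUnion]
            exact ⟨m, Finset.mem_range.2 hlt, hym⟩
          exact hball (mem_ball'.1 (lt_of_lt_of_le hxy (min_le_left _ _))) this
        have hy_inf : EMetric.infEdist y A ≤ ENNReal.ofReal (ε/2) :=
          (infEdist_le_attrDist (hEn_img m hym)).trans (ht₀ _ (htN m hymN))
        calc EMetric.infEdist x A ≤ edist x y + EMetric.infEdist y A :=
          EMetric.infEdist_le_edist_add_infEdist
        _ ≤ ENNReal.ofReal (ε/2) + ENNReal.ofReal (ε/2) := by
            refine add_le_add ?_ hy_inf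
            rw [edist_dist]
            exact ENNReal.ofReal_le_ofReal ((hxy.trans_le (min_le_right _ _)).le)
        _ = ENNReal.ofReal ε := by
            rw [← ENNReal.ofReal_add (by positivity) (by positivity)]; ring_nf
      by_contra hne
      have hpos : 0 < EMetric.infEdist x A := pos_iff_ne_zero.2 hne
      obtain ⟨r, -, hr1, hr2⟩ := ENNReal.lt_iff_exists_real_btwn.1 hpos
      exact absurd (hkey r (ENNReal.ofReal_pos.1 (by simpa using hr1))) (not_le.2 hr2)
    rwa [hAcomp.isClosed.closure_eq] at hAx
  have hM : A ∪ E₀ = closure E₀ :=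
    le_antisymm (Set.union_subset hAclos subset_closure) hclos_sub
  have hMB : closure E₀ ⊆ B := hclos_sub.trans (Set.union_subset hAB hE₀B)
  have hMne : (closure E₀).Nonempty := hAne.mono (hAclos.trans subset_rfl) |>.mono subset_rfl |> fun h => h
  -- S T invariance
  have hSTM : S T '' closure E₀ ⊆ closure E₀ := by
    rw [← hM, Set.image_union]
    refine Set.union_subset ?_ ?_
    · rw [hAinv T hT.le]
      exact Set.subset_union_left
    · intro y hy
      rw [hE₀def, Set.image_iUnion] at hy
      obtain ⟨n, hy⟩ := Set.mem_iUnion.1 hy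
      refine Set.mem_union_right _ (Set.mem_iUnion.2 ⟨n+1, ?_⟩)
      obtain ⟨x, hx, rfl⟩ := hy
      have hE : E (n+1) = W (n+1) ∪ (E n).image (S T) := rfl
      rw [hE]
      push_cast
      exact Set.mem_union_right _ (Set.mem_image_of_mem _ hx)
  have hMcomp : IsCompact (closure E₀) := by
    apply IsSeqCompact.isCompact
    intro u hu
    by_cases hc : ∃ N : ℕ, {j | u j ∈ A ∪ ⋃ m ∈ Finset.range N, (E m : Set V)}.Infinite
    · obtain ⟨N, hN⟩ := hc
      set K : Set V := A ∪ ⋃ m ∈ Finset.range N, (E m : Set V) with hKdef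
      have hKcomp : IsCompact K :=
        hAcomp.union ((Set.Finite.biUnion (Finset.range N).finite_toSet
          (fun m _ => (E m).finite_toSet)).isCompact)
      have hfreq : ∃ᶠ j in atTop, u j ∈ K := by
        rw [← Nat.cofinite_eq_atTop, Filter.frequently_cofinite_iff_infinite]
        exact hN
      obtain ⟨φ, hφ, hφK⟩ := extraction_of_frequently_atTop hfreq
      obtain ⟨α, hαK, ψ, hψ, hconv⟩ := hKcomp.isSeqCompact hφK
      refine ⟨α, ?_, φ ∘ ψ, hφ.comp hψ, hconv⟩
      rw [← hM]
      refine hαK.imp id fun hα => ?_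
      simp only [Set.mem_iUnion] at hα
      obtain ⟨m, -, hm⟩ := hα
      exact hEn_E₀ m hm
    · push_neg at hc
      have hfin : ∀ N : ℕ, {j | u j ∈ A ∪ ⋃ m ∈ Finset.range N, (E m : Set V)}.Finite := by
        intro N
        have h := hc N
        exact h
      have hev : ∀ N : ℕ, ∀ᶠ j in atTop, ∃ m : ℕ, N ≤ m ∧ u j ∈ (E m : Set V) := by
        intro N
        have h1 : ∀ᶠ j in atTop, u j ∉ A ∪ ⋃ m ∈ Finset.range N, (E m : Set V) := by
          rw [← Nat.cofinite_eq_atTop]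
          exact (hfin N).eventually_cofinite_notMem
        filter_upwards [h1] with j hj
        have hjM : u j ∈ A ∪ E₀ := hM ▸ hu j
        rcases hjM with hjA | hjE
        · exact absurd (Or.inl hjA) hj
        · obtain ⟨m, hm⟩ := Set.mem_iUnion.1 hjE
          refine ⟨m, ?_, hm⟩
          by_contra hlt
          push_neg at hlt
          exact hj (Or.inr (Set.mem_iUnion.2 ⟨m, Set.mem_iUnion.2
            ⟨Finset.mem_range.2 hlt, hm⟩⟩))
      have hinf0 : Tendsto (fun j => EMetric.infEdist (u j) A) atTop (𝓝 0) := by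
        rw [ENNReal.tendsto_nhds_zero]
        intro ε hε
        obtain ⟨t₀, ht₀⟩ := eventually_atTop.1
          ((ENNReal.tendsto_nhds_zero.1 (hAattr B hBbdd)) ε hε)
        obtain ⟨N, hN⟩ := exists_nat_ge (t₀ / T)
        filter_upwards [hev N] with j hj
        obtain ⟨m, hm, hjm⟩ := hj
        have htm : t₀ ≤ ((m + k₁ : ℕ) : ℝ) * T := by
          have h1 : (N : ℝ) ≤ ((m + k₁ : ℕ) : ℝ) := by
            push_cast
            have : (N:ℝ) ≤ m := by exact_mod_cast hm
            linarith [Nat.cast_nonneg (α := ℝ) k₁]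
          calc t₀ = t₀ / T * T := by field_simp
          _ ≤ (N : ℝ) * T := by nlinarith
          _ ≤ ((m + k₁ : ℕ) : ℝ) * T := by nlinarith
        exact (infEdist_le_attrDist (hEn_img m hjm)).trans (ht₀ _ htm)
      have hvex : ∀ j : ℕ, ∃ y ∈ A, EMetric.infEdist (u j) A = edist (u j) y :=
        fun j => hAcomp.exists_infEdist_eq_edist hAne (u j)
      choose v hvA hve using hvex
      obtain ⟨α, hαA, φ, hφ, hconv⟩ := hAcomp.isSeqCompact (fun j => hvA j)
      refine ⟨α, hAclos.trans subset_rfl hαA, φ, hφ, ?_⟩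
      have hd1 : Tendsto (fun j => EMetric.infEdist (u (φ j)) A) atTop (𝓝 0) :=
        hinf0.comp hφ.tendsto_atTop
      rw [Metric.tendsto_atTop]
      intro ε hε
      have hd2 := Metric.tendsto_atTop.1 hconv (ε/2) (by positivity)
      have hd3 := (ENNReal.tendsto_nhds_zero.1 hd1) (ENNReal.ofReal (ε/2))
        (by simp [ENNReal.ofReal_pos]; positivity)
      obtain ⟨N₁, hN₁⟩ := hd2
      obtain ⟨N₂, hN₂⟩ := eventually_atTop.1 hd3
      refine ⟨max N₁ N₂, fun j hj => ?_⟩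
      have h1 := hN₁ j (le_trans (le_max_left _ _) hj)
      have h2 := hN₂ j (le_trans (le_max_right _ _) hj)
      rw [hve (φ j), edist_dist, ENNReal.ofReal_le_ofReal_iff (by positivity)] at h2
      calc dist (u (φ j)) α ≤ dist (u (φ j)) (v (φ j)) + dist (v (φ j)) α := dist_triangle _ _ _
      _ < ε/2 + ε/2 := by exact add_lt_add_of_le_of_lt h2 h1
      _ = ε := by ring
  -- exponential attraction
  have hattr : ∀ ξ : ℝ, 0 < ξ → ξ < 1 / T * Real.log (1 / q) → ExpAttractsAt S (closure E₀) ξ := by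
    intro ξ hξ0 hξ G hG
    have hlq' : 0 < Real.log (1/q) := Real.log_pos (one_lt_one_div hq0 hq1)
    set L : ℝ := Real.log (1/q) with hLdef
    have hξL : ξ - L/T < 0 := by
      rw [sub_neg]
      calc ξ < 1/T * L := hξ
      _ = L/T := by ring
    obtain ⟨tG, htG0, htG⟩ := hBabs G hG
    have key : ∀ t : ℝ, tG + (k₁:ℝ)*T + T ≤ t →
        attrDist (S t '' G) (closure E₀) ≤ ENNReal.ofReal (a * q ^ (⌊(t - tG)/T⌋₊)) := by
      intro t ht
      have hk₁T0 : (0:ℝ) ≤ (k₁:ℝ)*T := by positivity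
      have httg : (k₁:ℝ)*T ≤ t - tG := by linarith
      have httg0 : 0 ≤ (t - tG)/T := div_nonneg (by linarith) hT.le
      set ν : ℕ := ⌊(t - tG)/T⌋₊ with hνdef
      have hν1 : (ν:ℝ) ≤ (t - tG)/T := Nat.floor_le httg0
      have hν2 : (ν:ℝ)*T ≤ t - tG := by
        rw [← le_div_iff₀ hT]; exact hν1
      have hνk : k₁ ≤ ν := Nat.le_floor (by rw [le_div_iff₀ hT]; exact httg)
      set n : ℕ := ν - k₁ with hndef
      have hn : n + k₁ = ν := Nat.sub_add_cancel hνk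
      have hncast : ((n + k₁ : ℕ) : ℝ) = (ν : ℝ) := by exact_mod_cast congrArg (Nat.cast (R := ℝ)) hn
      have hsub : S t '' G ⊆ S (((n + k₁ : ℕ) : ℝ) * T) '' B := by
        rw [hncast]
        intro x hx
        obtain ⟨g, hg, rfl⟩ := hx
        have h1 : S ((ν:ℝ)*T) (S (t - (ν:ℝ)*T) g) = S t g := by
          rw [hSadd _ _ (by positivity) (by linarith) g]
          congr 1; ring
        rw [← h1]
        exact Set.mem_image_of_mem _ (htG _ (by linarith) (Set.mem_image_of_mem _ hg))
      refine attrDist_le_of fun x hx => ?_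
      obtain ⟨w, hw, hxw⟩ := Set.mem_iUnion₂.1 (hWcov n (hsub hx))
      calc EMetric.infEdist x (closure E₀) ≤ edist x w :=
        EMetric.infEdist_le_edist_of_mem (subset_closure (hWE n hw))
      _ ≤ ENNReal.ofReal (a * q ^ ν) := by
          rw [edist_dist]
          refine ENNReal.ofReal_le_ofReal ?_
          rw [← hn]
          exact (mem_ball.1 hxw).le
    set C : ℝ := a * Real.exp (L*(tG/T + 1)) with hCdef
    have hbound : ∀ᶠ t in atTop,
        ENNReal.ofReal (Real.exp (ξ * t)) * attrDist (S t '' G) (closure E₀) ≤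
        ENNReal.ofReal (C * Real.exp ((ξ - L/T)*t)) := by
      filter_upwards [eventually_ge_atTop (tG + (k₁:ℝ)*T + T)] with t ht
      calc ENNReal.ofReal (Real.exp (ξ * t)) * attrDist (S t '' G) (closure E₀) ≤
          ENNReal.ofReal (Real.exp (ξ * t)) * ENNReal.ofReal (a * q ^ (⌊(t - tG)/T⌋₊)) :=
        mul_le_mul' le_rfl (key t ht)
      _ = ENNReal.ofReal (Real.exp (ξ * t) * (a * q ^ (⌊(t - tG)/T⌋₊))) :=
        (ENNReal.ofReal_mul (Real.exp_nonneg _)).symm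
      _ ≤ ENNReal.ofReal (C * Real.exp ((ξ - L/T)*t)) := by
          refine ENNReal.ofReal_le_ofReal ?_
          set ν : ℕ := ⌊(t - tG)/T⌋₊ with hνdef
          have hν3 : (t - tG)/T - 1 ≤ (ν:ℝ) := by
            have := Nat.lt_floor_add_one ((t - tG)/T)
            linarith
          have hqν : q ^ ν = Real.exp (-(ν:ℝ) * L) := by
            have h1 : q ^ ν = Real.exp (Real.log (q ^ ν)) :=
              (Real.exp_log (pow_pos hq0 ν)).symm
            rw [h1, Real.log_pow]
            congr 1
            have : Real.log q = -L := by
              rw [hLdef, one_div, Real.log_inv]; ring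
            rw [this]; ring
          have hqν2 : q ^ ν ≤ Real.exp (-((t - tG)/T - 1) * L) := by
            rw [hqν]
            refine Real.exp_le_exp.2 ?_
            nlinarith [hlq'.le]
          calc Real.exp (ξ * t) * (a * q ^ ν) ≤
              Real.exp (ξ * t) * (a * Real.exp (-((t - tG)/T - 1) * L)) := by
                exact mul_le_mul_of_nonneg_left (mul_le_mul_of_nonneg_left hqν2 ha.le) (Real.exp_nonneg _)
          _ = C * Real.exp ((ξ - L/T)*t) := by
              have e1 : Real.exp (ξ * t) * (a * Real.exp (-((t - tG)/T - 1) * L)) =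
                  a * Real.exp (ξ * t + -((t - tG)/T - 1) * L) := by
                rw [mul_comm a, ← mul_assoc, ← Real.exp_add]; ring
              have e2 : C * Real.exp ((ξ - L/T)*t) =
                  a * Real.exp (L*(tG/T + 1) + (ξ - L/T)*t) := by
                rw [hCdef, mul_assoc, ← Real.exp_add]
              rw [e1, e2]
              congr 1
              field_simp
              ring
    have hg0 : Tendsto (fun t : ℝ => ENNReal.ofReal (C * Real.exp ((ξ - L/T)*t)))
        atTop (𝓝 0) := by
      have hgr : Tendsto (fun t : ℝ => C * Real.exp ((ξ - L/T)*t)) atTop (𝓝 0) := by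
        have h1 : Tendsto (fun t : ℝ => (ξ - L/T)*t) atTop atBot :=
          tendsto_id.const_mul_atTop_of_neg hξL
        have h2 := Real.tendsto_exp_atBot.comp h1
        simpa using h2.const_mul C
      have := (ENNReal.continuous_ofReal.tendsto 0).comp hgr
      simpa [Function.comp_def] using this
    exact tendsto_of_tendsto_of_tendsto_of_le_of_le' tendsto_const_nhds hg0
      (Eventually.of_forall fun t => zero_le) hbound
  -- fractal dimension bound
  have hdim : fracDim (closure E₀) ≤ ENNReal.ofReal (Real.log h / Real.log (1 / q)) := by
    have hlq' : 0 < Real.log (1/q) := Real.log_pos (one_lt_one_div hq0 hq1)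
    set L : ℝ := Real.log (1/q) with hLdef
    set D : ℝ := Real.log h / L with hDdef
    have hD0 : 0 ≤ D := div_nonneg (Real.log_nonneg hh) hlq'.le
    have hDL : D * L = Real.log h := div_mul_cancel₀ _ hlq'.ne'
    have hh0 : (0:ℝ) < h := lt_of_lt_of_le one_pos hh
    have hlogq : Real.log q = -L := by rw [hLdef, one_div, Real.log_inv]; ring
    -- covering count for the compact set
    have hcovN : ∀ n : ℕ, coverN (closure E₀) (2*a*q^(n + k₁)) ≤
        ENNReal.ofReal (((n:ℝ)+(k₁:ℝ)+1)^2 * (b*h^(n+2*k₁)+1)) := by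
      intro n
      classical
      set F : Finset V := W n ∪ (Finset.range (n+k₁)).biUnion E with hFdef
      have hFsub : ↑F ⊆ closure E₀ := by
        intro x hx
        rw [Finset.mem_coe, hFdef, Finset.mem_union] at hx
        rcases hx with hx | hx
        · exact subset_closure (hWE n hx)
        · obtain ⟨m, -, hm⟩ := Finset.mem_biUnion.1 hx
          exact subset_closure (hEn_E₀ m hm)
      have hballW : ∀ x : V, x ∈ S (((n + k₁ : ℕ) : ℝ) * T) '' B →
          x ∈ ⋃ y ∈ F, ball y (2*a*q^(n + k₁)) := by
        intro x hx
        obtain ⟨w, hw, hxw⟩ := Set.mem_iUnion₂.1 (hWcov n hx)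
        refine Set.mem_iUnion₂.2 ⟨w, Finset.mem_union_left _ hw, ?_⟩
        refine mem_ball.2 ((mem_ball.1 hxw).trans_le ?_)
        nlinarith [pow_pos hq0 (n+k₁)]
      have hFcov : closure E₀ ⊆ ⋃ y ∈ F, ball y (2*a*q^(n + k₁)) := by
        intro x hx
        rw [← hM] at hx
        rcases hx with hx | hx
        · exact hballW x (hA_img _ (by positivity) hx)
        · obtain ⟨m, hm⟩ := Set.mem_iUnion.1 hx
          by_cases hmn : n + k₁ ≤ m
          · exact hballW x (hEm_late n m hmn hm)
          · push_neg at hmn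
            refine Set.mem_iUnion₂.2 ⟨x, ?_, mem_ball_self (by positivity)⟩
            exact Finset.mem_union_right _ (Finset.mem_biUnion.2
              ⟨m, Finset.mem_range.2 hmn, Finset.mem_coe.1 hm⟩)
      have hEcard' : ∀ m : ℕ, m < n + k₁ →
          ((E m).card : ℝ) ≤ ((n:ℝ)+k₁) * (b*h^(n+2*k₁)+1) := by
        intro m hm
        refine (hEcard m).trans ?_
        have h1 : ((m:ℝ) + 1) ≤ (n:ℝ) + k₁ := by exact_mod_cast Nat.succ_le_of_lt hm
        have h2 : h^(m+k₁) ≤ h^(n+2*k₁) := pow_le_pow_right₀ hh (by omega)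
        have h4 : b*h^(m+k₁)+1 ≤ b*h^(n+2*k₁)+1 := by nlinarith
        exact mul_le_mul h1 h4 (by positivity) (by positivity)
      have hFcard : (F.card : ℝ) ≤ ((n:ℝ)+(k₁:ℝ)+1)^2 * (b*h^(n+2*k₁)+1) := by
        have h1 : F.card ≤ (W n).card + ∑ m ∈ Finset.range (n+k₁), (E m).card :=
          (Finset.card_union_le _ _).trans
            (Nat.add_le_add_left (Finset.card_biUnion_le) _)
        have h1' : (F.card : ℝ) ≤ ((W n).card : ℝ) +
            ∑ m ∈ Finset.range (n+k₁), ((E m).card : ℝ) := by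
          push_cast [← Nat.cast_sum]
          exact_mod_cast h1
        have h2 : ∑ m ∈ Finset.range (n+k₁), ((E m).card : ℝ) ≤
            ((n:ℝ)+k₁) * (((n:ℝ)+k₁) * (b*h^(n+2*k₁)+1)) := by
          calc ∑ m ∈ Finset.range (n+k₁), ((E m).card : ℝ) ≤
              ∑ _m ∈ Finset.range (n+k₁), ((n:ℝ)+k₁) * (b*h^(n+2*k₁)+1) :=
            Finset.sum_le_sum fun m hm => hEcard' m (Finset.mem_range.1 hm)
          _ = ((n:ℝ)+k₁) * (((n:ℝ)+k₁) * (b*h^(n+2*k₁)+1)) := by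
            rw [Finset.sum_const, Finset.card_range]
            push_cast; ring
        have h3 : ((W n).card : ℝ) ≤ b*h^(n+2*k₁)+1 := by
          refine (hWcard n).trans ?_
          have : h^(n+k₁) ≤ h^(n+2*k₁) := pow_le_pow_right₀ hh (by omega)
          nlinarith
        have h4 : (0:ℝ) < b*h^(n+2*k₁)+1 := by positivity
        have h5 : (0:ℝ) ≤ (n:ℝ)+k₁ := by positivity
        nlinarith [h1', h2, h3]
      calc coverN (closure E₀) (2*a*q^(n + k₁)) ≤ (F.card : ℝ≥0∞) :=
        coverN_le_card F hFsub hFcov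
      _ ≤ ENNReal.ofReal (((n:ℝ)+(k₁:ℝ)+1)^2 * (b*h^(n+2*k₁)+1)) := by
        rw [← ENNReal.ofReal_natCast F.card]
        exact ENNReal.ofReal_le_ofReal hFcard
    -- the simplified majorant
    set P : ℕ → ℝ := fun n => ((n:ℝ)+(k₁:ℝ)+2)^2 * ((b+1) * h^(n + 1 + 2*k₁)) with hPdef
    have hP0 : ∀ n : ℕ, (0:ℝ) < P n := by
      intro n; simp only [hPdef]; positivity
    have hQP : ∀ n : ℕ, ((n:ℝ)+1+(k₁:ℝ)+1)^2 * (b*h^((n+1)+2*k₁)+1) ≤ P n := by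
      intro n
      have h1 : (1:ℝ) ≤ h^((n+1)+2*k₁) := one_le_pow₀ hh
      have h2 : b*h^((n+1)+2*k₁)+1 ≤ (b+1)*h^((n+1)+2*k₁) := by nlinarith
      have h3 : (0:ℝ) ≤ ((n:ℝ)+1+(k₁:ℝ)+1)^2 := sq_nonneg _
      simp only [hPdef]
      calc ((n:ℝ)+1+(k₁:ℝ)+1)^2 * (b*h^((n+1)+2*k₁)+1)
          ≤ ((n:ℝ)+1+(k₁:ℝ)+1)^2 * ((b+1)*h^((n+1)+2*k₁)) :=
        mul_le_mul_of_nonneg_left h2 h3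
      _ = ((n:ℝ)+(k₁:ℝ)+2)^2 * ((b+1)*h^(n+1+2*k₁)) := by ring
    have hlogP : ∀ n : ℕ, Real.log (P n) =
        2*Real.log ((n:ℝ)+(k₁:ℝ)+2) + Real.log (b+1) + ((n:ℝ)+1+2*(k₁:ℝ))*Real.log h := by
      intro n
      simp only [hPdef]
      have h1 : ((n:ℝ)+(k₁:ℝ)+2) ≠ 0 := by positivity
      have h2 : ((n:ℝ)+(k₁:ℝ)+2)^2 ≠ 0 := by positivity
      have h3 : (b+1) ≠ 0 := by positivity
      have h4 : h^(n+1+2*k₁) ≠ 0 := by positivity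
      rw [Real.log_mul h2 (by positivity), Real.log_mul h3 h4, Real.log_pow, Real.log_pow]
      push_cast
      ring
    -- outer reduction to a real δ
    refine ENNReal.le_of_forall_pos_le_add fun δ' hδ' _ => ?_
    set δ : ℝ := (δ' : ℝ) with hδdef
    have hδ0 : 0 < δ := hδ'
    have hgoal : ENNReal.ofReal (D + δ) ≤ ENNReal.ofReal D + (δ' : ℝ≥0∞) := by
      rw [ENNReal.ofReal_add hD0 hδ0.le, ENNReal.ofReal_coe_nnreal]
    refine le_trans ?_ hgoal
    -- eventual inequality in n
    have hNev : ∀ᶠ n : ℕ in atTop,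
        Real.log (P n) ≤ (D + δ)*((n:ℝ)*L - Real.log (2*a)) ∧
        1 ≤ (n:ℝ)*L - Real.log (2*a) := by
      have hc : (0:ℝ) < δ*L/8 := by positivity
      have htend : Tendsto (fun n : ℕ => (n:ℝ)+(k₁:ℝ)+2) atTop atTop :=
        tendsto_atTop_add_const_right _ _ (tendsto_atTop_add_const_right _ _
          tendsto_natCast_atTop_atTop)
      have ev1 : ∀ᶠ n : ℕ in atTop,
          Real.log ((n:ℝ)+(k₁:ℝ)+2) ≤ δ*L/8 * ((n:ℝ)+(k₁:ℝ)+2) := by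
        have h1 := Real.isLittleO_log_id_atTop.def hc
        filter_upwards [htend.eventually h1, htend.eventually (eventually_ge_atTop 1)]
          with n hn hn1
        have h2 : Real.log ((n:ℝ)+(k₁:ℝ)+2) ≤ ‖Real.log ((n:ℝ)+(k₁:ℝ)+2)‖ :=
          le_abs_self _
        have h3 : ‖id ((n:ℝ)+(k₁:ℝ)+2)‖ = (n:ℝ)+(k₁:ℝ)+2 := by
          simp only [id]
          exact abs_of_nonneg (by linarith)
        rw [h3] at hn
        linarith
      have ev2 : ∀ᶠ n : ℕ in atTop, (n:ℝ)+(k₁:ℝ)+2 ≤ 2*(n:ℝ) := by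
        filter_upwards [eventually_ge_atTop (k₁+2)] with n hn
        have : (k₁:ℝ)+2 ≤ (n:ℝ) := by exact_mod_cast hn
        linarith
      have hev3t : Tendsto (fun n : ℕ => (n:ℝ)*(δ*L/2)) atTop atTop :=
        tendsto_natCast_atTop_atTop.atTop_mul_const (by positivity)
      have ev3 : ∀ᶠ n : ℕ in atTop,
          Real.log (b+1) + (1+2*(k₁:ℝ))*Real.log h + (D+δ)*Real.log (2*a) ≤
          (n:ℝ)*(δ*L/2) :=
        hev3t.eventually_ge_atTop _
      have hev4t : Tendsto (fun n : ℕ => (n:ℝ)*L) atTop atTop :=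
        tendsto_natCast_atTop_atTop.atTop_mul_const hlq'
      have ev4 : ∀ᶠ n : ℕ in atTop, 1 + Real.log (2*a) ≤ (n:ℝ)*L :=
        hev4t.eventually_ge_atTop _
      filter_upwards [ev1, ev2, ev3, ev4] with n h1 h2 h3 h4
      constructor
      · rw [hlogP n]
        have hlogh := Real.log_nonneg hh
        nlinarith [hlq'.le, hδ0.le]
      · linarith
    obtain ⟨N, hN⟩ := eventually_atTop.1 hNev
    -- the eventual bound in ε
    set ε₁ : ℝ := min (2*a*q^(N+k₁+1)) 1 with hε₁def
    have hε₁pos : 0 < ε₁ := lt_min (by positivity) one_pos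
    have hevε : ∀ᶠ ε in 𝓝[>] (0:ℝ), ε ∈ Set.Ioo 0 ε₁ :=
      Ioo_mem_nhdsGT hε₁pos
    rw [fracDim]
    refine limsup_le_of_le (by isBoundedDefault) ?_
    filter_upwards [hevε] with ε hε
    obtain ⟨hε0, hεlt⟩ := hε
    have hε1 : ε < 1 := hεlt.trans_le (min_le_right _ _)
    have hεN : ε < 2*a*q^(N+k₁+1) := hεlt.trans_le (min_le_left _ _)
    have hex : ∃ n : ℕ, 2*a*q^(n+k₁+1) < ε := by
      obtain ⟨n, hn⟩ := exists_pow_lt_of_lt_one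
        (show (0:ℝ) < ε/(2*a*q^(k₁+1)) by positivity) hq1
      refine ⟨n, ?_⟩
      have h1 : q^(n+k₁+1) = q^n * q^(k₁+1) := by
        rw [← pow_add]; rfl
      have h2 : q^n < ε/(2*a*q^(k₁+1)) := hn
      have h3 : (0:ℝ) < 2*a*q^(k₁+1) := by positivity
      rw [h1]
      calc 2*a*(q^n * q^(k₁+1)) = q^n * (2*a*q^(k₁+1)) := by ring
      _ < ε/(2*a*q^(k₁+1)) * (2*a*q^(k₁+1)) := by
          exact mul_lt_mul_of_pos_right h2 h3
      _ = ε := by field_simp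
    obtain ⟨n, hfind, hmin⟩ : ∃ n : ℕ, 2*a*q^(n+k₁+1) < ε ∧
        ∀ m : ℕ, m < n → ¬(2*a*q^(m+k₁+1) < ε) :=
      ⟨Nat.find hex, Nat.find_spec hex, fun m hm => Nat.find_min hex hm⟩
    have hnN : N ≤ n := by
      by_contra hlt
      push_neg at hlt
      have h1 : q^(N+k₁+1) ≤ q^(n+k₁+1) :=
        pow_le_pow_of_le_one hq0.le hq1.le (by omega)
      nlinarith
    have hεle : ε ≤ 2*a*q^(n+k₁) := by
      rcases Nat.eq_zero_or_pos n with hn0 | hn0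
      · have h1 : q^(N+k₁+1) ≤ q^(n+k₁) :=
          pow_le_pow_of_le_one hq0.le hq1.le (by omega)
        nlinarith
      · obtain ⟨m, hm⟩ := Nat.exists_eq_succ_of_ne_zero hn0.ne'
        have h1 := hmin m (by omega)
        push_neg at h1
        have h2 : m+k₁+1 = n+k₁ := by omega
        rwa [h2] at h1
    -- the coverN bound at ε
    have hcov1 : coverN (closure E₀) ε ≤ ENNReal.ofReal (P n) := by
      have h1 : coverN (closure E₀) ε ≤ coverN (closure E₀) (2*a*q^((n+1)+k₁)) := by
        refine coverN_anti ?_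
        have : (n+1)+k₁ = n+k₁+1 := by omega
        rw [this]
        exact hfind.le
      refine h1.trans ((hcovN (n+1)).trans ?_)
      refine ENNReal.ofReal_le_ofReal ?_
      have := hQP n
      have hcast : ((n+1:ℕ):ℝ) = (n:ℝ)+1 := by push_cast; ring
      calc (((n+1:ℕ):ℝ)+(k₁:ℝ)+1)^2 * (b*h^((n+1)+2*k₁)+1)
          = ((n:ℝ)+1+(k₁:ℝ)+1)^2 * (b*h^((n+1)+2*k₁)+1) := by rw [hcast]
      _ ≤ P n := hQP n
    have hcovTop : coverN (closure E₀) ε ≠ ⊤ :=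
      ne_top_of_le_ne_top ENNReal.ofReal_ne_top hcov1
    have hcov1R : (coverN (closure E₀) ε).toReal ≤ P n :=
      ENNReal.toReal_le_of_le_ofReal (hP0 n).le hcov1
    have hcovge1 : 1 ≤ (coverN (closure E₀) ε).toReal := by
      have h1 := one_le_coverN (G := closure E₀) (ε := ε) hMne
      have := ENNReal.toReal_mono hcovTop h1
      simpa using this
    rw [if_neg hcovTop]
    refine ENNReal.ofReal_le_ofReal ?_
    -- real-number computation
    obtain ⟨hPle, hden1⟩ := hN n hnN
    have hlogε1 : Real.log (1/ε) = -Real.log ε := by rw [one_div, Real.log_inv]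
    have hlogε2 : (n:ℝ)*L - Real.log (2*a) ≤ Real.log (1/ε) := by
      rw [hlogε1]
      have h1 : Real.log ε ≤ Real.log (2*a*q^(n+k₁)) :=
        Real.log_le_log hε0 hεle
      have h2 : Real.log (2*a*q^(n+k₁)) = Real.log (2*a) + ((n:ℝ)+k₁)*Real.log q := by
        rw [Real.log_mul (by positivity) (by positivity), Real.log_pow]
        push_cast; ring
      rw [h2, hlogq] at h1
      have hk₁0 : (0:ℝ) ≤ (k₁:ℝ) := Nat.cast_nonneg _
      nlinarith [hlq'.le]
    have hlogεpos : 0 < Real.log (1/ε) := by linarith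
    have hlogNle : Real.log (coverN (closure E₀) ε).toReal ≤ Real.log (P n) :=
      Real.log_le_log (by linarith) hcov1R
    have hlogN0 : 0 ≤ Real.log (coverN (closure E₀) ε).toReal :=
      Real.log_nonneg hcovge1
    calc Real.log (coverN (closure E₀) ε).toReal / Real.log (1/ε) ≤
        Real.log (P n) / Real.log (1/ε) := by gcongr
    _ ≤ Real.log (P n) / ((n:ℝ)*L - Real.log (2*a)) :=
      div_le_div_of_nonneg_left (by linarith) (by linarith) hlogε2
    _ ≤ D + δ := by
      rw [div_le_iff₀ (by linarith)]
      linarith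
  have hlq : 0 < Real.log (1/q) := Real.log_pos (one_lt_one_div hq0 hq1)
  refine ⟨E₀, hE₀ctble, hE₀B, hM, hMB, ⟨hMne, hMcomp, hSTM, ?_, ?_⟩, hattr, hdim⟩
  · exact ne_top_of_le_ne_top ENNReal.ofReal_ne_top hdim
  · refine ⟨Real.log (1/q) / (2*T), by positivity, hattr _ (by positivity) ?_⟩
    rw [one_div T, inv_mul_eq_div]
    exact div_lt_div_of_pos_left hlq hT (by linarith)

end Statement3
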